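/- Let Γ be a group and G a compact Hausdorff topological group. Let H, H' : Γ → G be group homomorphisms (not assumed continuous) such that for every finitely generated subgroup S of Γ there exists g_S ∈ G with H'(s) = g_S^{-1} H(s) g_S for all s ∈ S. Then there exists a single g ∈ G with H'(γ) = g^{-1} H(γ) g for all γ ∈ Γ; i.e., H and H' are conjugate. -/

import Mathlib

/-- If two homomorphisms `H, H' : Γ → G` into a compact Hausdorff
topological group are conjugate on every finitely generated subgroup of `Γ`, then they
are conjugate by a single element of `G`. -/
theorem conjugate_of_conjugate_on_fg_subgroups
    {Γ G : Type*} [Group Γ] [Group G] [TopologicalSpace G] [IsTopologicalGroup G]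
    [CompactSpace G] [T2Space G]
    (H H' : Γ →* G)
    (hconj : ∀ S : Subgroup Γ, S.FG → ∃ g : G, ∀ s : S, H' s = g⁻¹ * H s * g) :
    ∃ g : G, ∀ γ : Γ, H' γ = g⁻¹ * H γ * g := by
  set Z : Γ → Set G := fun γ => {g : G | H' γ = g⁻¹ * H γ * g} with hZ
  have hclosed : ∀ γ, IsClosed (Z γ) := by
    intro γ
    have hcont : Continuous fun g : G => g⁻¹ * H γ * g := by continuity
    have : Z γ = (fun g : G => g⁻¹ * H γ * g) ⁻¹' {H' γ} := by
      ext g; simp [hZ, eq_comm]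
    rw [this]
    exact IsClosed.preimage hcont isClosed_singleton
  have hne : (⋂ γ, Z γ).Nonempty := by
    by_contra hemp
    rw [Set.not_nonempty_iff_eq_empty] at hemp
    have := IsCompact.elim_finite_subfamily_closed (isCompact_univ (X := G)) Z hclosed
      (by rw [Set.univ_inter]; exact hemp)
    obtain ⟨t, ht⟩ := this
    rw [Set.univ_inter] at ht
    obtain ⟨g, hg⟩ := hconj (Subgroup.closure (t : Set Γ))
      ((Subgroup.fg_iff _).2 ⟨(t : Set Γ), rfl, t.finite_toSet⟩)
    have : g ∈ ⋂ γ ∈ t, Z γ := by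
      refine Set.mem_iInter₂.2 fun γ hγ => ?_
      exact hg ⟨γ, Subgroup.subset_closure hγ⟩
    rw [ht] at this
    exact this
  obtain ⟨g, hg⟩ := hne
  exact ⟨g, fun γ => Set.mem_iInter.1 hg γ⟩
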